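/- Let R ⊆ ℝ be a set containing an infinite strictly increasing sequence. Then there exists a function f : ℕ^ℕ → ℝ with range contained in R such that Player I has a winning strategy in the game Γ(f) on the full tree of finite sequences of natural numbers, and for each r ∈ ℝ and each Cantor set C ⊆ ℕ^ℕ, the set C ∩ {x ∈ ℕ^ℕ : f(x) ≥ r} is either uncountable or empty. -/

import Mathlib

open Filter Topology

/-- The initial segment `(x₀, …, x_{n-1})` of an infinite sequence `x`. -/
def initSeg {β : Type*} (x : ℕ → β) (n : ℕ) : List β :=
  List.ofFn fun i : Fin n => x i

/-- `T` is a pruned tree on `A`: it contains the empty sequence, is closed under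
prefixes, and every element has a proper extension in `T`. -/
def IsPrunedTree {A : Type*} (T : Set (List A)) : Prop :=
  [] ∈ T ∧ (∀ s ∈ T, ∀ t : List A, t <+: s → t ∈ T) ∧ ∀ s ∈ T, ∃ a : A, s ++ [a] ∈ T

/-- The space `X` of infinite branches of the tree `T`, topologized as a subspace of
the product `ℕ → A` (with `A` discrete); this is exactly the cylinder-set topology. -/
abbrev Branches {A : Type*} (T : Set (List A)) : Type _ :=
  {x : ℕ → A // ∀ n : ℕ, initSeg x n ∈ T}

/-- The cylinder set `O(s)` of all branches with initial segment `s`. -/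
def cyl {A : Type*} (T : Set (List A)) (s : List A) : Set (Branches T) :=
  {x | initSeg x.val s.length = s}

/-- `f : X → ℝ` is a limsup function: there is `u` defined on finite sequences with
`f x = limsup_{t → ∞} u (x₀, …, x_t)` for every branch `x` (the limsup being computed
in the extended reals and required to equal the real number `f x`). -/
def IsLimsupFunction {A : Type*} {T : Set (List A)} (f : Branches T → ℝ) : Prop :=
  ∃ u : List A → ℝ, ∀ x : Branches T,
    (f x : EReal) = Filter.limsup (fun t : ℕ => (u (initSeg x.val (t + 1)) : EReal)) Filter.atTop

/-- `f` is of Baire class 1: a pointwise limit of continuous functions. -/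
def BaireClassOne {X : Type*} [TopologicalSpace X] (f : X → ℝ) : Prop :=
  ∃ g : ℕ → X → ℝ, (∀ n, Continuous (g n)) ∧
    ∀ x, Filter.Tendsto (fun n => g n x) Filter.atTop (nhds (f x))

/-- A Cantor set: a subset homeomorphic to the Cantor space `2^ℕ`. -/
def IsCantorSet {X : Type*} [TopologicalSpace X] (C : Set X) : Prop :=
  Nonempty (C ≃ₜ (ℕ → Bool))

/-- A Bernstein set: neither it nor its complement contains a nonempty perfect set. -/
def IsBernsteinSet {X : Type*} [TopologicalSpace X] (B : Set X) : Prop :=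
  ∀ P : Set X, Perfect P → P.Nonempty → ¬ P ⊆ B ∧ ¬ P ⊆ Bᶜ

/-- A co-analytic set: the complement of an analytic set. -/
def IsCoanalytic {X : Type*} [TopologicalSpace X] (s : Set X) : Prop :=
  MeasureTheory.AnalyticSet sᶜ

/-- The sequence of moves produced by Player I's strategy `σ` against the sequence `v`
of moves of Player II: Player I's `n`-th move depends on `(v₀, …, v_{n-1})`. -/
def playI {A M : Type*} (σ : List M → A) (v : ℕ → M) : ℕ → A :=
  fun n => σ (initSeg v n)

/-- Player II has a winning strategy in the game `Γ(f)`: a strategy for Player II assigns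
to each position `(x₀, …, x_t)` of moves of Player I a real number `v_t` (Player II's own
previous moves being determined), and it is winning if for every run, i.e. every branch
`x` that Player I may produce, `f x = limsup_{t → ∞} v_t`. -/
def PlayerIIWinsGamma {A : Type*} {T : Set (List A)} (f : Branches T → ℝ) : Prop :=
  ∃ τ : List A → ℝ, ∀ x : Branches T,
    (f x : EReal) = Filter.limsup (fun t : ℕ => (τ (initSeg x.val (t + 1)) : EReal)) Filter.atTop

/-- Player I has a winning strategy in the game `Γ_R(f)` where Player II's moves are
restricted to `R`: a strategy for Player I assigns to each position `(v₀, …, v_{n-1})` of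
moves of Player II a point of `A`, and it is winning if against every sequence of moves
of Player II in `R` the moves of Player I are legal (all initial segments lie in `T`) and
the resulting branch `x` satisfies `f x ≠ limsup_{t → ∞} v_t`. -/
def PlayerIWinsGammaR {A : Type*} {T : Set (List A)} (R : Set ℝ) (f : Branches T → ℝ) :
    Prop :=
  ∃ σ : List ℝ → A, ∀ v : ℕ → ℝ, (∀ t, v t ∈ R) →
    ∃ h : ∀ n : ℕ, initSeg (playI σ v) n ∈ T,
      (f ⟨playI σ v, h⟩ : EReal) ≠ Filter.limsup (fun t : ℕ => (v t : EReal)) Filter.atTop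

/-- Player I has a winning strategy in the game `Γ(f)`. -/
def PlayerIWinsGamma {A : Type*} {T : Set (List A)} (f : Branches T → ℝ) : Prop :=
  ∃ σ : List ℝ → A, ∀ v : ℕ → ℝ,
    ∃ h : ∀ n : ℕ, initSeg (playI σ v) n ∈ T,
      (f ⟨playI σ v, h⟩ : EReal) ≠ Filter.limsup (fun t : ℕ => (v t : EReal)) Filter.atTop

/-- Player II has a winning strategy in the game `Γ'(f)`, in which Player II's moves are
pairs `(v_t, w_t)` of reals and Player II wins a run iff
`f x = limsup_{t → ∞} v_t = liminf_{t → ∞} w_t`. -/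
def PlayerIIWinsGamma' {A : Type*} {T : Set (List A)} (f : Branches T → ℝ) : Prop :=
  ∃ τ : List A → ℝ × ℝ, ∀ x : Branches T,
    (f x : EReal) =
      Filter.limsup (fun t : ℕ => ((τ (initSeg x.val (t + 1))).1 : EReal)) Filter.atTop ∧
    (f x : EReal) =
      Filter.liminf (fun t : ℕ => ((τ (initSeg x.val (t + 1))).2 : EReal)) Filter.atTop

/-- Player I has a winning strategy in the game `Γ'(f)`. -/
def PlayerIWinsGamma' {A : Type*} {T : Set (List A)} (f : Branches T → ℝ) : Prop :=
  ∃ σ : List (ℝ × ℝ) → A, ∀ v : ℕ → ℝ × ℝ,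
    ∃ h : ∀ n : ℕ, initSeg (playI σ v) n ∈ T,
      ¬ ((f ⟨playI σ v, h⟩ : EReal) =
            Filter.limsup (fun t : ℕ => ((v t).1 : EReal)) Filter.atTop ∧
         (f ⟨playI σ v, h⟩ : EReal) =
            Filter.liminf (fun t : ℕ => ((v t).2 : EReal)) Filter.atTop)

namespace GammaAux

open Filter Topology Set Cardinal

abbrev XX : Type := Branches (Set.univ : Set (List ℕ))

instance : SecondCountableTopology XX :=
  TopologicalSpace.secondCountableTopology_induced _ _ (Subtype.val : XX → (ℕ → ℕ))

/-! ### the countable set `D` of eventually-zero sequences -/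

def Dset : Set (ℕ → ℕ) := {x | ∃ N, ∀ n ≥ N, x n = 0}

lemma countable_Dset : Dset.Countable := by
  have h : Dset = ⋃ N : ℕ, {x : ℕ → ℕ | ∀ n ≥ N, x n = 0} := by
    ext x; simp [Dset]
  rw [h]
  refine Set.countable_iUnion fun N => ?_
  have : Countable ↥{x : ℕ → ℕ | ∀ n ≥ N, x n = 0} := by
    refine Function.Injective.countable
      (f := fun x : ↥{x : ℕ → ℕ | ∀ n ≥ N, x n = 0} => (fun i : Fin N => x.val i)) ?_
    rintro ⟨x, hx⟩ ⟨y, hy⟩ hxy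
    ext n
    show x n = y n
    rcases lt_or_ge n N with hn | hn
    · exact congrFun hxy ⟨n, hn⟩
    · rw [hx n hn, hy n hn]
  exact Set.countable_coe_iff.mp this

noncomputable def sc (x : ℕ → ℕ) : ℕ := {n | x n ≠ 0}.ncard

/-! ### Player I's strategy bookkeeping -/

variable (g : ℕ → ℝ)

noncomputable def Kc (v : ℕ → ℝ) : ℕ → ℕ := fun n =>
  Nat.rec 0 (fun m ih => if g ih ≤ v m then ih + 1 else ih) n

noncomputable def mvs (v : ℕ → ℝ) : ℕ → ℕ := fun n =>
  match n with
  | 0 => 0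
  | m + 1 => if g (Kc g v m) ≤ v m then Kc g v m + 1 else 0

lemma Kc_zero (v : ℕ → ℝ) : Kc g v 0 = 0 := rfl

lemma Kc_succ (v : ℕ → ℝ) (n : ℕ) :
    Kc g v (n + 1) = if g (Kc g v n) ≤ v n then Kc g v n + 1 else Kc g v n := rfl

lemma mvs_zero (v : ℕ → ℝ) : mvs g v 0 = 0 := rfl

lemma mvs_succ (v : ℕ → ℝ) (n : ℕ) :
    mvs g v (n + 1) = if g (Kc g v n) ≤ v n then Kc g v n + 1 else 0 := rfl

lemma Kc_mono (v : ℕ → ℝ) : Monotone (Kc g v) := by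
  refine monotone_nat_of_le_succ fun n => ?_
  rw [Kc_succ]; split <;> omega

lemma Kc_congr {v w : ℕ → ℝ} : ∀ {n : ℕ}, (∀ i < n, v i = w i) → Kc g v n = Kc g w n
  | 0, _ => rfl
  | n + 1, h => by
    have ih := Kc_congr (v := v) (w := w) (n := n) (fun i hi => h i (hi.trans n.lt_succ_self))
    rw [Kc_succ, Kc_succ, ih, h n n.lt_succ_self]

lemma mvs_congr {v w : ℕ → ℝ} : ∀ {n : ℕ}, (∀ i < n, v i = w i) → mvs g v n = mvs g w n
  | 0, _ => rfl
  | n + 1, h => by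
    have ih := Kc_congr g (v := v) (w := w) (n := n) (fun i hi => h i (hi.trans n.lt_succ_self))
    rw [mvs_succ, mvs_succ, ih, h n n.lt_succ_self]

lemma Kc_card (v : ℕ → ℝ) : ∀ n : ℕ,
    Kc g v n = ((Finset.range (n + 1)).filter (fun i => mvs g v i ≠ 0)).card
  | 0 => by simp [Kc_zero, Finset.range_one, Finset.filter_singleton, mvs_zero]
  | n + 1 => by
    have ih := Kc_card v n
    rw [show n + 1 + 1 = (n + 1) + 1 from rfl, Finset.range_add_one, Finset.filter_insert]
    by_cases h : g (Kc g v n) ≤ v n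
    · have hnz : mvs g v (n + 1) ≠ 0 := by rw [mvs_succ, if_pos h]; omega
      rw [if_pos hnz, Finset.card_insert_of_notMem (by simp), ← ih, Kc_succ, if_pos h]
    · have hz : ¬ (mvs g v (n + 1) ≠ 0) := by rw [mvs_succ, if_neg h]; omega
      rw [if_neg hz, ← ih, Kc_succ, if_neg h]

/-- No-increment steps kill `mvs`; increments are exactly nonzero moves. -/
lemma strat_cases (hg : StrictMono g) (v : ℕ → ℝ) :
    (∃ k : ℕ, mvs g v ∈ Dset ∧ sc (mvs g v) = k ∧ ∀ᶠ n in atTop, v n < g k)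
    ∨ (mvs g v ∉ Dset ∧ ∀ j : ℕ, ∃ᶠ n in atTop, g j ≤ v n) := by
  by_cases hbd : ∀ m : ℕ, ∃ n, m ≤ Kc g v n
  · -- unbounded counter
    right
    have hnoconst : ∀ N : ℕ, ∃ n ≥ N, g (Kc g v n) ≤ v n := by
      intro N
      by_contra hcon
      push_neg at hcon
      have hconst : ∀ n ≥ N, Kc g v n = Kc g v N := by
        intro n hn
        induction n, hn using Nat.le_induction with
        | base => rfl
        | succ m hm ih => rw [Kc_succ, if_neg (not_le.mpr (hcon m hm)), ih]
      obtain ⟨n, hn⟩ := hbd (Kc g v N + 1)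
      rcases le_or_gt n N with h' | h'
      · exact absurd (le_trans hn (Kc_mono g v h')) (by omega)
      · rw [hconst n h'.le] at hn; omega
    constructor
    · rintro ⟨N, hN⟩
      obtain ⟨n, hn, hcond⟩ := hnoconst N
      have : mvs g v (n + 1) ≠ 0 := by rw [mvs_succ, if_pos hcond]; omega
      exact this (hN (n + 1) (by omega))
    · intro j
      rw [Filter.frequently_atTop]
      intro M
      obtain ⟨n0, hn0⟩ := hbd j
      obtain ⟨n, hn, hcond⟩ := hnoconst (max M n0)
      refine ⟨n, le_trans (le_max_left _ _) hn, le_trans ?_ hcond⟩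
      exact hg.monotone (le_trans hn0 (Kc_mono g v (le_trans (le_max_right _ _) hn)))
  · -- bounded counter
    left
    push_neg at hbd
    obtain ⟨m, hm⟩ := hbd
    have hmax : ∃ N, ∀ n, Kc g v n ≤ Kc g v N := by
      by_contra h'
      push_neg at h'
      have grow : ∀ j : ℕ, ∃ n, j ≤ Kc g v n := by
        intro j
        induction j with
        | zero => exact ⟨0, Nat.zero_le _⟩
        | succ j ih =>
          obtain ⟨n, hn⟩ := ih
          obtain ⟨n', hn'⟩ := h' n
          exact ⟨n', by omega⟩
      obtain ⟨n, hn⟩ := grow m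
      exact absurd (hm n) (by omega)
    obtain ⟨N, hN⟩ := hmax
    have hconst : ∀ n ≥ N, Kc g v n = Kc g v N :=
      fun n hn => le_antisymm (hN n) (Kc_mono g v hn)
    have hcondf : ∀ n ≥ N, ¬ g (Kc g v n) ≤ v n := by
      intro n hn hcond
      have h1 : Kc g v (n + 1) = Kc g v n + 1 := by rw [Kc_succ, if_pos hcond]
      rw [hconst n hn, hconst (n + 1) (by omega)] at h1
      omega
    have hzero : ∀ n ≥ N + 1, mvs g v n = 0 := by
      intro n hn
      obtain ⟨p, rfl⟩ : ∃ p, n = p + 1 := ⟨n - 1, by omega⟩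
      rw [mvs_succ, if_neg (hcondf p (by omega))]
    refine ⟨Kc g v N, ⟨N + 1, hzero⟩, ?_, ?_⟩
    · have hfin : {n | mvs g v n ≠ 0}.Finite := by
        refine Set.Finite.subset (Set.finite_Iio (N + 1)) ?_
        intro n hn
        by_contra h'
        exact hn (hzero n (by simpa [Set.mem_Iio, not_lt] using h'))
      have : hfin.toFinset = (Finset.range (N + 1)).filter (fun i => mvs g v i ≠ 0) := by
        ext i
        simp only [Set.Finite.mem_toFinset, Set.mem_setOf_eq, Finset.mem_filter,
          Finset.mem_range]
        constructor
        · intro hi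
          refine ⟨?_, hi⟩
          by_contra h'
          exact hi (hzero i (by omega))
        · exact fun h => h.2
      have hsc : sc (mvs g v) = hfin.toFinset.card := Set.ncard_eq_toFinset_card _ hfin
      rw [hsc, this, ← Kc_card]
    · rw [Filter.eventually_atTop]
      refine ⟨N, fun n hn => ?_⟩
      have := hcondf n hn
      rw [hconst n hn] at this
      exact not_le.mp this

end GammaAux

namespace GammaAux

open Filter Topology Set Cardinal

/-! ### Cantor set machinery -/

lemma mk_cantorSpace : #(ℕ → Bool) = Cardinal.continuum := by
  rw [← Cardinal.power_def, Cardinal.mk_bool, Cardinal.mk_nat, Cardinal.two_power_aleph0]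

lemma not_countable_cantorSpace : ¬ Countable (ℕ → Bool) := by
  intro h
  have h1 := Cardinal.mk_le_aleph0_iff.mpr h
  rw [mk_cantorSpace] at h1
  exact absurd h1 (not_le.mpr Cardinal.aleph0_lt_continuum)

lemma cantor_mk_eq {C : Set XX} (hC : IsCantorSet C) : #↥C = Cardinal.continuum :=
  (Cardinal.mk_congr (Classical.choice hC).toEquiv).trans mk_cantorSpace

lemma cantor_isClosed {C : Set XX} (hC : IsCantorSet C) : IsClosed C := by
  have h := Classical.choice hC
  have : CompactSpace ↥C := h.symm.compactSpace
  exact (isCompact_iff_compactSpace.mpr this).isClosed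

lemma isCantorSet_range {m : (ℕ → Bool) → XX} (hc : Continuous m)
    (hi : Function.Injective m) : IsCantorSet (Set.range m) :=
  ⟨((hc.isClosedEmbedding hi).toIsEmbedding.toHomeomorph).symm⟩

lemma exists_base_cantor : ∃ C : Set XX, IsCantorSet C := by
  refine ⟨Set.range (fun b : ℕ → Bool => (⟨fun n => cond (b n) 1 0, fun _ => trivial⟩ : XX)),
    isCantorSet_range ?_ ?_⟩
  · refine Continuous.subtype_mk ?_ _
    refine continuous_pi fun n => ?_
    exact Continuous.comp (continuous_of_discreteTopology (f := fun t : Bool => cond t (1 : ℕ) 0)) (continuous_apply n)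
  · intro a b hab
    ext n
    have h := congrFun (congrArg Subtype.val hab) n
    cases ha : a n <;> cases hb : b n <;> simp_all

lemma mk_cantor_family_le : #{C : Set XX // IsCantorSet C} ≤ Cardinal.continuum := by
  obtain ⟨b, hbc, -, hbasis⟩ := TopologicalSpace.exists_countable_basis XX
  have hinj : Function.Injective
      (fun C : {C : Set XX // IsCantorSet C} => {s : ↥b | (s : Set XX) ⊆ (C : Set XX)ᶜ}) := by
    intro C₁ C₂ hEq
    have h1 := hbasis.open_eq_sUnion' (cantor_isClosed C₁.2).isOpen_compl
    have h2 := hbasis.open_eq_sUnion' (cantor_isClosed C₂.2).isOpen_compl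
    have hset : {s | s ∈ b ∧ s ⊆ (C₁ : Set XX)ᶜ} = {s | s ∈ b ∧ s ⊆ (C₂ : Set XX)ᶜ} := by
      ext s
      constructor
      · rintro ⟨hs, hsub⟩
        exact ⟨hs, by simpa using (Set.ext_iff.mp hEq ⟨s, hs⟩).mp hsub⟩
      · rintro ⟨hs, hsub⟩
        exact ⟨hs, by simpa using (Set.ext_iff.mp hEq ⟨s, hs⟩).mpr hsub⟩
    have hcompl : (C₁ : Set XX)ᶜ = (C₂ : Set XX)ᶜ := by rw [h1, h2, hset]
    exact Subtype.ext (compl_injective hcompl)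
  calc #{C : Set XX // IsCantorSet C} ≤ #(Set ↥b) := Cardinal.mk_le_of_injective hinj
    _ = 2 ^ #↥b := Cardinal.mk_set
    _ ≤ 2 ^ Cardinal.aleph0 :=
        Cardinal.power_le_power_left two_ne_zero (Cardinal.mk_le_aleph0_iff.mpr hbc.to_subtype)
    _ = Cardinal.continuum := Cardinal.two_power_aleph0

/-- an uncountable pairwise disjoint family of Cantor subsets of a Cantor set -/
lemma exists_disjoint_family {C : Set XX} (hC : IsCantorSet C) :
    ∃ ψ : (ℕ → Bool) → Set XX, (∀ a, IsCantorSet (ψ a)) ∧ (∀ a, ψ a ⊆ C) ∧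
      (∀ a a', a ≠ a' → Disjoint (ψ a) (ψ a')) := by
  obtain ⟨h⟩ := hC
  set J : (ℕ → Bool) → (ℕ → Bool) → ℕ → Bool :=
    fun a b n => if n % 2 = 0 then a (n / 2) else b (n / 2) with hJ
  have hodd : ∀ m : ℕ, (2 * m + 1) % 2 ≠ 0 ∧ (2 * m + 1) / 2 = m := fun m => by omega
  have heven : ∀ m : ℕ, (2 * m) % 2 = 0 ∧ (2 * m) / 2 = m := fun m => by omega
  have hJeq : ∀ a a' b b', J a b = J a' b' → a = a' ∧ b = b' := by
    intro a a' b b' hE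
    constructor
    · ext m
      have h2 := congrFun hE (2 * m)
      simp only [hJ] at h2
      rwa [if_pos (heven m).1, if_pos (heven m).1, (heven m).2] at h2
    · ext m
      have h2 := congrFun hE (2 * m + 1)
      simp only [hJ] at h2
      rwa [if_neg (hodd m).1, if_neg (hodd m).1, (hodd m).2] at h2
  have hJcont : ∀ a, Continuous (J a) := by
    intro a
    refine continuous_pi fun n => ?_
    rw [hJ]
    by_cases hn : n % 2 = 0
    · simpa [hn] using continuous_const (y := a (n / 2))
    · simpa [hn] using continuous_apply (n / 2)
  refine ⟨fun a => Set.range (fun b => ((h.symm (J a b) : ↥C) : XX)), fun a => ?_, fun a => ?_,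
      fun a a' haa => ?_⟩
  · refine isCantorSet_range (continuous_subtype_val.comp (h.symm.continuous.comp (hJcont a))) ?_
    intro b b' hbb
    exact (hJeq a a b b' (h.symm.injective (Subtype.coe_injective hbb))).2
  · rintro _ ⟨b, rfl⟩
    exact (h.symm (J a b)).2
  · rw [Set.disjoint_left]
    rintro _ ⟨b, rfl⟩ ⟨b', hb'⟩
    exact haa ((hJeq a' a b' b (h.symm.injective (Subtype.coe_injective hb'))).1).symm

/-! ### transfinite construction of the partition -/

abbrev iot : Type := (Cardinal.continuum).ord.ToType

def DXX : Set XX := {x : XX | x.val ∈ Dset}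

lemma countable_DXX : DXX.Countable :=
  countable_Dset.preimage Subtype.coe_injective

def goodSet (e : iot → Set XX) (i : iot) (rec : ∀ j, j < i → ℕ ↪ XX) : Set XX :=
  e i \ (DXX ∪ ⋃ p : {j : iot // j < i}, Set.range (rec p.1 p.2))

lemma good_nonempty (e : iot → Set XX) (he : ∀ i, IsCantorSet (e i)) (i : iot)
    (rec : ∀ j, j < i → ℕ ↪ XX) : Nonempty (ℕ ↪ ↥(goodSet e i rec)) := by
  have hA : #↥(DXX ∪ ⋃ p : {j : iot // j < i}, Set.range (rec p.1 p.2)) < Cardinal.continuum := by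
    refine lt_of_le_of_lt (Cardinal.mk_union_le _ _) ?_
    refine Cardinal.add_lt_of_lt Cardinal.aleph0_le_continuum
      (lt_of_le_of_lt (Cardinal.mk_le_aleph0_iff.mpr countable_DXX.to_subtype)
        Cardinal.aleph0_lt_continuum) ?_
    refine lt_of_le_of_lt (Cardinal.mk_iUnion_le _) ?_
    refine Cardinal.mul_lt_of_lt Cardinal.aleph0_le_continuum ?_ ?_
    · have : #{j : iot // j < i} = #(Set.Iio i) := Cardinal.mk_congr
        (Equiv.subtypeEquivRight fun j => (Set.mem_Iio).symm)
      rw [this]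
      exact Cardinal.mk_Iio_toType_ord_lt i
    · refine lt_of_le_of_lt (ciSup_le' fun p => ?_) Cardinal.aleph0_lt_continuum
      exact le_trans Cardinal.mk_range_le (le_of_eq Cardinal.mk_nat)
  have hgood : Cardinal.continuum ≤ #↥(goodSet e i rec) := by
    by_contra hlt
    push_neg at hlt
    have hsub : (e i : Set XX) ⊆ (goodSet e i rec) ∪
        (DXX ∪ ⋃ p : {j : iot // j < i}, Set.range (rec p.1 p.2)) := by
      intro x hx
      by_cases hx' : x ∈ DXX ∪ ⋃ p : {j : iot // j < i}, Set.range (rec p.1 p.2)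
      · exact Or.inr hx'
      · exact Or.inl ⟨hx, hx'⟩
    have h1 : #↥(e i) ≤ #↥(goodSet e i rec) + #↥(DXX ∪ ⋃ p : {j : iot // j < i},
        Set.range (rec p.1 p.2)) :=
      le_trans (Cardinal.mk_le_mk_of_subset hsub) (Cardinal.mk_union_le _ _)
    rw [cantor_mk_eq (he i)] at h1
    exact absurd h1 (not_le.mpr (Cardinal.add_lt_of_lt Cardinal.aleph0_le_continuum hlt hA))
  refine (Cardinal.le_def ℕ _).mp ?_
  rw [Cardinal.mk_nat]
  exact le_trans Cardinal.aleph0_le_continuum hgood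

noncomputable def FF (e : iot → Set XX) (he : ∀ i, IsCantorSet (e i)) : iot → ℕ ↪ XX :=
  (IsWellFounded.wf (α := iot) (r := (· < ·))).fix fun i rec =>
    (Classical.choice (good_nonempty e he i rec)).trans (Function.Embedding.subtype _)

lemma FF_spec (e : iot → Set XX) (he : ∀ i, IsCantorSet (e i)) (i : iot) :
    Set.range (FF e he i) ⊆ goodSet e i (fun j _ => FF e he j) := by
  have hfix := WellFounded.fix_eq (IsWellFounded.wf (α := iot) (r := (· < ·)))
    (fun i rec => (Classical.choice (good_nonempty e he i rec)).trans
      (Function.Embedding.subtype _)) i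
  rintro _ ⟨n, rfl⟩
  rw [show FF e he i = _ from hfix]
  exact ((Classical.choice (good_nonempty e he i _)) n).2

lemma FF_mem (e he) (i : iot) (n : ℕ) : FF e he i n ∈ e i := (FF_spec e he i ⟨n, rfl⟩).1

lemma FF_not_D (e he) (i : iot) (n : ℕ) : FF e he i n ∉ DXX :=
  fun h => (FF_spec e he i ⟨n, rfl⟩).2 (Or.inl h)

lemma FF_not_prev (e he) {j i : iot} (hj : j < i) (n : ℕ) :
    FF e he i n ∉ Set.range (FF e he j) :=
  fun h => (FF_spec e he i ⟨n, rfl⟩).2 (Or.inr (Set.mem_iUnion.mpr ⟨⟨j, hj⟩, h⟩))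

lemma FF_apart (e he) {i i' : iot} (hii : i ≠ i') (n n' : ℕ) :
    FF e he i n ≠ FF e he i' n' := by
  rcases lt_or_gt_of_ne hii with h | h
  · exact fun hE => FF_not_prev e he h n' ⟨n, hE⟩
  · exact fun hE => FF_not_prev e he h n ⟨n', hE.symm⟩

noncomputable def phi (e : iot → Set XX) (he : ∀ i, IsCantorSet (e i)) : XX → ℕ :=
  fun x => @dite _ (∃ p : iot × ℕ, FF e he p.1 p.2 = x) (Classical.dec _)
    (fun h => (Classical.choose h).2) (fun _ => 0)

lemma phi_FF (e he) (i : iot) (n : ℕ) : phi e he (FF e he i n) = n := by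
  have hex : ∃ p : iot × ℕ, FF e he p.1 p.2 = FF e he i n := ⟨(i, n), rfl⟩
  rw [phi]
  rw [dif_pos hex]
  have hp := Classical.choose_spec hex
  by_cases hpi : (Classical.choose hex).1 = i
  · rw [hpi] at hp
    exact (FF e he i).injective hp
  · exact absurd hp (FF_apart e he hpi _ _)

lemma exists_enum : ∃ e : iot → Set XX, (∀ i, IsCantorSet (e i)) ∧
    ∀ C : Set XX, IsCantorSet C → ∃ i, e i = C := by
  have hne : Nonempty {C : Set XX // IsCantorSet C} := by
    obtain ⟨C, hC⟩ := exists_base_cantor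
    exact ⟨⟨C, hC⟩⟩
  have hle : #{C : Set XX // IsCantorSet C} ≤ #iot := by
    rw [Cardinal.mk_ord_toType]
    exact mk_cantor_family_le
  obtain ⟨emb⟩ := (Cardinal.le_def _ _).mp hle
  refine ⟨fun i => (Function.invFun emb i).val, fun i => (Function.invFun emb i).2,
    fun C hC => ⟨emb ⟨C, hC⟩, ?_⟩⟩
  show (Function.invFun emb (emb ⟨C, hC⟩)).val = C
  rw [Function.leftInverse_invFun emb.injective ⟨C, hC⟩]

lemma exists_phi : ∃ φ : XX → ℕ, ∀ C : Set XX, IsCantorSet C → ∀ n : ℕ,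
    ¬ ({x : XX | x ∈ C ∧ φ x = n ∧ x.val ∉ Dset}).Countable := by
  obtain ⟨e, he, hsurj⟩ := exists_enum
  refine ⟨phi e he, fun C hC n hcount => ?_⟩
  obtain ⟨ψ, hψC, hψsub, hψdisj⟩ := exists_disjoint_family hC
  choose iF hiF using fun a => hsurj (ψ a) (hψC a)
  set pt : (ℕ → Bool) → XX := fun a => FF e he (iF a) n with hpt
  have hmem : ∀ a, pt a ∈ {x : XX | x ∈ C ∧ phi e he x = n ∧ x.val ∉ Dset} := by
    intro a
    refine ⟨hψsub a ?_, phi_FF e he _ _, FF_not_D e he _ _⟩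
    show FF e he (iF a) n ∈ ψ a
    rw [← hiF a]
    exact FF_mem e he _ _
  have hinj : Function.Injective pt := by
    intro a a' hE
    by_contra hne
    rcases eq_or_ne (iF a) (iF a') with hF | hF
    · have h1 : pt a ∈ ψ a := by
        show FF e he (iF a) n ∈ ψ a
        rw [← hiF a]; exact FF_mem e he _ _
      have h2 : pt a ∈ ψ a' := by
        show FF e he (iF a) n ∈ ψ a'
        rw [hF, ← hiF a']; exact FF_mem e he _ _
      exact Set.disjoint_left.mp (hψdisj a a' hne) h1 h2
    · exact FF_apart e he hF n n hE
  have : Countable ↥{x : XX | x ∈ C ∧ phi e he x = n ∧ x.val ∉ Dset} := hcount.to_subtype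
  refine not_countable_cantorSpace ?_
  exact Function.Injective.countable
    (f := fun a => (⟨pt a, hmem a⟩ : ↥{x : XX | x ∈ C ∧ phi e he x = n ∧ x.val ∉ Dset}))
    (fun a a' hE => hinj (congrArg Subtype.val hE))

end GammaAux

namespace GammaAux

open Filter Topology Set

lemma playerI_wins (g : ℕ → ℝ) (hg : StrictMono g) (f : XX → ℝ) (φ : XX → ℕ)
    (hfD : ∀ x : XX, x.val ∈ Dset → f x = g (sc x.val + 1))
    (hfB : ∀ x : XX, x.val ∉ Dset → f x = g (φ x)) :
    PlayerIWinsGamma f := by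
  set σ : List ℝ → ℕ := fun s => mvs g (fun i => s.getD i 0) s.length with hσ
  refine ⟨σ, fun v => ⟨fun n => Set.mem_univ _, ?_⟩⟩
  have hx : playI σ v = mvs g v := by
    funext n
    show mvs g (fun i => (initSeg v n).getD i 0) (initSeg v n).length = mvs g v n
    have hlen : (initSeg v n).length = n := by simp [initSeg]
    rw [hlen]
    refine mvs_congr g fun i hi => ?_
    have hil : i < (initSeg v n).length := by rwa [hlen]
    rw [List.getD_eq_getElem _ _ hil]
    simp [initSeg]
  rcases strat_cases g hg v with ⟨k, hD, hsc, hev⟩ | ⟨hnD, hfreq⟩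
  · have hmem : (⟨playI σ v, fun n => Set.mem_univ _⟩ : XX).val ∈ Dset := by
      show playI σ v ∈ Dset
      rw [hx]; exact hD
    have hfx : f ⟨playI σ v, fun n => Set.mem_univ _⟩ = g (k + 1) := by
      rw [hfD _ hmem]
      show g (sc (playI σ v) + 1) = g (k + 1)
      rw [hx, hsc]
    rw [hfx]
    have hlim : Filter.limsup (fun t : ℕ => ((v t : ℝ) : EReal)) Filter.atTop ≤ (g k : EReal) := by
      refine Filter.limsup_le_of_le (by isBoundedDefault) ?_
      exact hev.mono fun n hn => EReal.coe_le_coe_iff.mpr hn.le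
    have hlt : Filter.limsup (fun t : ℕ => ((v t : ℝ) : EReal)) Filter.atTop
        < ((g (k + 1) : ℝ) : EReal) :=
      lt_of_le_of_lt hlim (EReal.coe_lt_coe_iff.mpr (hg (lt_add_one k)))
    exact hlt.ne'
  · have hmem : (⟨playI σ v, fun n => Set.mem_univ _⟩ : XX).val ∉ Dset := by
      show ¬ playI σ v ∈ Dset
      rw [hx]; exact hnD
    rw [hfB _ hmem]
    set m := φ ⟨playI σ v, fun n => Set.mem_univ _⟩ with hm
    have hlim : ((g (m + 1) : ℝ) : EReal)
        ≤ Filter.limsup (fun t : ℕ => ((v t : ℝ) : EReal)) Filter.atTop := by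
      refine Filter.le_limsup_of_frequently_le ?_ (by isBoundedDefault)
      exact (hfreq (m + 1)).mono fun n hn => EReal.coe_le_coe_iff.mpr hn
    have hlt : ((g m : ℝ) : EReal)
        < Filter.limsup (fun t : ℕ => ((v t : ℝ) : EReal)) Filter.atTop :=
      lt_of_lt_of_le (EReal.coe_lt_coe_iff.mpr (hg (lt_add_one m))) hlim
    exact hlt.ne

end GammaAux

/-- If `R ⊆ ℝ` contains an infinite strictly increasing sequence, then there is a function
`f : ℕ^ℕ → ℝ` with range contained in `R` such that Player I has a winning strategy in
`Γ(f)` and `C ∩ {f ≥ r}` is either uncountable or empty for every `r ∈ ℝ` and every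
Cantor set `C ⊆ ℕ^ℕ`. -/
theorem exists_playerI_wins_uncountable_or_empty_of_strictMono_seq
    (R : Set ℝ) (hR : ∃ g : ℕ → ℝ, StrictMono g ∧ ∀ n, g n ∈ R) :
    ∃ f : Branches (Set.univ : Set (List ℕ)) → ℝ,
      (∀ x, f x ∈ R) ∧
      PlayerIWinsGamma f ∧
      ∀ (r : ℝ) (C : Set (Branches (Set.univ : Set (List ℕ)))),
        IsCantorSet C →
          ¬ (C ∩ {x | r ≤ f x}).Countable ∨ C ∩ {x | r ≤ f x} = ∅ := by
  classical
  obtain ⟨g, hg, hgR⟩ := hR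
  obtain ⟨φ, hφ⟩ := GammaAux.exists_phi
  set f : GammaAux.XX → ℝ :=
    fun x => if x.val ∈ GammaAux.Dset then g (GammaAux.sc x.val + 1) else g (φ x) with hf
  have hfD : ∀ x : GammaAux.XX, x.val ∈ GammaAux.Dset → f x = g (GammaAux.sc x.val + 1) :=
    fun x hx => by rw [hf]; exact if_pos hx
  have hfB : ∀ x : GammaAux.XX, x.val ∉ GammaAux.Dset → f x = g (φ x) :=
    fun x hx => by rw [hf]; exact if_neg hx
  have hrange : ∀ n : ℕ, ∀ x : GammaAux.XX, f x = g n → f x ∈ R := fun n x hx => hx ▸ hgR n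
  refine ⟨f, ?_, GammaAux.playerI_wins g hg f φ hfD hfB, ?_⟩
  · intro x
    by_cases hx : x.val ∈ GammaAux.Dset
    · exact hrange _ x (hfD x hx)
    · exact hrange _ x (hfB x hx)
  · intro r C hC
    by_cases hr : ∃ n : ℕ, r ≤ g n
    · left
      obtain ⟨n, hn⟩ := hr
      intro hcount
      refine hφ C hC n (Set.Countable.mono ?_ hcount)
      rintro x ⟨hxC, hxphi, hxD⟩
      refine ⟨hxC, ?_⟩
      show r ≤ f x
      rw [hfB x hxD, hxphi]
      exact hn
    · right
      push_neg at hr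
      rw [Set.eq_empty_iff_forall_notMem]
      rintro x ⟨-, hx⟩
      have hx' : r ≤ f x := hx
      by_cases hxD : x.val ∈ GammaAux.Dset
      · rw [hfD x hxD] at hx'
        exact absurd hx' (not_le.mpr (hr _))
      · rw [hfB x hxD] at hx'
        exact absurd hx' (not_le.mpr (hr _))
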